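/- Let g(x,y) = (y / Γ(1+y)^{1/y}) · (Γ(1+xy)^{1/y} / (y^x · Γ(1+x))) for x ≥ 1/2 and y ≥ 2. Then for every fixed y ≥ 2, the function x ↦ g(x,y) is non-increasing on [1/2, ∞); that is, for all 1/2 ≤ x₁ ≤ x₂ and y ≥ 2, g(x₂,y) ≤ g(x₁,y). -/

import Mathlib

open Real Set Filter

noncomputable def psi (s : ℝ) : ℝ := deriv Real.Gamma s / Real.Gamma s

lemma hasDerivAt_logGamma {s : ℝ} (hs : 0 < s) :
    HasDerivAt (fun t => Real.log (Real.Gamma t)) (psi s) s := by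
  have hd : DifferentiableAt ℝ Real.Gamma s := by
    refine Real.differentiableAt_Gamma fun m => ?_
    intro h
    rw [h] at hs
    have : (0:ℝ) ≤ (m:ℝ) := Nat.cast_nonneg m
    linarith
  exact hd.hasDerivAt.log (Real.Gamma_pos_of_pos hs).ne'

lemma psi_le_log {s : ℝ} (hs : 0 < s) : psi s ≤ Real.log s := by
  have h := Real.convexOn_log_Gamma.le_slope_of_hasDerivAt (mem_Ioi.2 hs)
    (mem_Ioi.2 (by linarith : (0:ℝ) < s + 1)) (lt_add_one s) (hasDerivAt_logGamma hs)
  rw [slope_def_field] at h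
  simp only [Function.comp_apply] at h
  rw [Real.Gamma_add_one hs.ne', Real.log_mul hs.ne' (Real.Gamma_pos_of_pos hs).ne'] at h
  calc psi s ≤ _ := h
    _ = Real.log s := by field_simp; ring

lemma log_le_psi {s : ℝ} (hs : 1 < s) : Real.log (s - 1) ≤ psi s := by
  have hs1 : (0:ℝ) < s - 1 := by linarith
  have h := Real.convexOn_log_Gamma.slope_le_of_hasDerivAt (mem_Ioi.2 hs1)
    (mem_Ioi.2 (by linarith : (0:ℝ) < s)) (by linarith : s - 1 < s)
    (hasDerivAt_logGamma (by linarith))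
  rw [slope_def_field] at h
  simp only [Function.comp_apply] at h
  have hG : Real.Gamma s = (s - 1) * Real.Gamma (s - 1) := by
    have := Real.Gamma_add_one hs1.ne'
    rw [sub_add_cancel] at this
    exact this
  rw [hG, Real.log_mul hs1.ne' (Real.Gamma_pos_of_pos hs1).ne'] at h
  calc Real.log (s-1) = (Real.log (s-1) + Real.log (Real.Gamma (s-1)) -
        Real.log (Real.Gamma (s-1))) / (s - (s-1)) := by field_simp; ring
    _ ≤ psi s := h

lemma psi_add_one {s : ℝ} (hs : 0 < s) : psi (s + 1) = psi s + 1 / s := by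
  have h1 : HasDerivAt (fun t : ℝ => Real.log (Real.Gamma (t + 1))) (psi (s+1) * 1) s :=
    (hasDerivAt_logGamma (by linarith)).comp s ((hasDerivAt_id s).add_const 1)
  have h2 : HasDerivAt (fun t : ℝ => Real.log t + Real.log (Real.Gamma t)) (s⁻¹ + psi s) s :=
    (Real.hasDerivAt_log hs.ne').add (hasDerivAt_logGamma hs)
  have h3 : (fun t : ℝ => Real.log t + Real.log (Real.Gamma t)) =ᶠ[nhds s]
      (fun t : ℝ => Real.log (Real.Gamma (t + 1))) := by
    filter_upwards [eventually_gt_nhds hs] with t ht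
    rw [Real.Gamma_add_one ht.ne', Real.log_mul ht.ne' (Real.Gamma_pos_of_pos ht).ne']
  have := (h1.congr_of_eventuallyEq h3).unique h2
  rw [mul_one] at this
  rw [this, one_div]; ring

lemma psi_add_nat {s : ℝ} (hs : 0 < s) (n : ℕ) :
    psi (s + n) = psi s + ∑ k ∈ Finset.range n, 1 / (s + k) := by
  induction n with
  | zero => simp
  | succ n ih =>
    have h1 : s + (n+1 : ℕ) = (s + n) + 1 := by push_cast; ring
    rw [h1, psi_add_one (by positivity), ih, Finset.sum_range_succ]; ring

lemma one_div_le_log_sub {t : ℝ} (ht : 1 ≤ t) : 1 / t ≤ Real.log (t + 1/2) - Real.log (t - 1/2) := by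
  have ht0 : (0:ℝ) < t := by linarith
  set h : ℝ → ℝ := fun u => Real.log (t + u) - Real.log (t - u) - 2 * u / t with hh
  have hd : ∀ u ∈ Icc (0:ℝ) (1/2), HasDerivAt h ((t+u)⁻¹ + (t-u)⁻¹ - 2/t) u := by
    intro u hu
    have h1 : (0:ℝ) < t + u := by have := hu.1; linarith
    have h2 : (0:ℝ) < t - u := by have := hu.2; linarith
    have d1 : HasDerivAt (fun u : ℝ => Real.log (t + u)) ((t+u)⁻¹ * 1) u :=
      (Real.hasDerivAt_log h1.ne').comp u ((hasDerivAt_id u).const_add t)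
    have d2 : HasDerivAt (fun u : ℝ => Real.log (t - u)) ((t-u)⁻¹ * (-1)) u :=
      (Real.hasDerivAt_log h2.ne').comp u ((hasDerivAt_id u).const_sub t)
    have d3 : HasDerivAt (fun u : ℝ => 2 * u / t) (2 / t) u := by
      have heq : (fun u : ℝ => 2 * u / t) = fun u : ℝ => u * (2/t) := by funext v; ring
      rw [heq]; exact hasDerivAt_mul_const _
    have := (d1.sub d2).sub d3
    exact this.congr_deriv (by ring)
  have hmono : MonotoneOn h (Icc (0:ℝ) (1/2)) := by
    apply monotoneOn_of_deriv_nonneg (convex_Icc _ _)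
    · exact fun u hu => ((hd u hu).continuousAt.continuousWithinAt)
    · intro u hu
      rw [interior_Icc] at hu
      exact ((hd u (Ioo_subset_Icc_self hu)).differentiableAt).differentiableWithinAt
    · intro u hu
      rw [interior_Icc] at hu
      rw [(hd u (Ioo_subset_Icc_self hu)).deriv]
      have h1 : (0:ℝ) < t + u := by have := hu.1; linarith
      have h2 : (0:ℝ) < t - u := by have := hu.2.le; linarith
      have key : (t+u)⁻¹ + (t-u)⁻¹ = 2*t / ((t+u)*(t-u)) := by field_simp; ring
      rw [key, sub_nonneg, div_le_div_iff₀ ht0 (mul_pos h1 h2)]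
      nlinarith [sq_nonneg u]
  have h0 : h 0 = 0 := by simp [hh]
  have h12 := hmono (left_mem_Icc.2 (by norm_num)) (right_mem_Icc.2 (by norm_num)) (by norm_num)
  rw [h0] at h12
  have : 2 * (1/2) / t = 1 / t := by ring
  simp only [hh, this] at h12
  linarith

lemma sum_le_log {s : ℝ} (hs : 3/2 ≤ s) (n : ℕ) :
    ∑ k ∈ Finset.range n, 1 / (s + k) ≤ Real.log (s + n - 1/2) - Real.log (s - 1/2) := by
  induction n with
  | zero => simp
  | succ n ih =>
    rw [Finset.sum_range_succ]
    have ht : (1:ℝ) ≤ s + n := by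
      have : (0:ℝ) ≤ (n:ℝ) := Nat.cast_nonneg n
      linarith
    have := one_div_le_log_sub ht
    have hcast : s + (n+1 : ℕ) - 1/2 = (s + n) + 1/2 := by push_cast; ring
    rw [hcast]
    have h2 : s + (n:ℝ) - 1/2 = (s + n) - 1/2 := by ring
    rw [h2] at ih
    linarith

lemma log_half_le_psi {s : ℝ} (hs : 3/2 ≤ s) : Real.log (s - 1/2) ≤ psi s := by
  have hs0 : (0:ℝ) < s := by linarith
  have hbound : ∀ n : ℕ,
      Real.log (s + n - 1) - Real.log (s + n - 1/2) + Real.log (s - 1/2) ≤ psi s := by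
    intro n
    have hn0 : (0:ℝ) ≤ (n:ℝ) := Nat.cast_nonneg n
    have h1 : Real.log (s + n - 1) ≤ psi (s + n) := log_le_psi (by linarith)
    have h2 := sum_le_log hs n
    have h3 := psi_add_nat hs0 n
    linarith
  have htend : Tendsto (fun n : ℕ =>
      Real.log (s + n - 1) - Real.log (s + n - 1/2) + Real.log (s - 1/2)) atTop
      (nhds (Real.log (s - 1/2))) := by
    have h0 : Tendsto (fun n : ℕ => Real.log (s + n - 1) - Real.log (s + n - 1/2)) atTop
        (nhds 0) := by
      have hA : Tendsto (fun n : ℕ => (s + n - 1) / (s + n - 1/2)) atTop (nhds 1) := by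
        have hf : Tendsto (fun n : ℕ => s + (n:ℝ) - 1/2) atTop atTop := by
          have h' := Filter.tendsto_atTop_add_const_right atTop (s - 1/2)
            (tendsto_natCast_atTop_atTop (R := ℝ))
          refine h'.congr fun n => by ring
        have hB : Tendsto (fun n : ℕ => (1/2 : ℝ) / (s + n - 1/2)) atTop (nhds 0) :=
          Tendsto.div_atTop tendsto_const_nhds hf
        have hC := (tendsto_const_nhds (x := (1:ℝ)) (f := atTop)).sub hB
        rw [sub_zero] at hC
        refine hC.congr fun n => ?_
        have hpos : (0:ℝ) < s + n - 1/2 := by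
          have : (0:ℝ) ≤ (n:ℝ) := Nat.cast_nonneg n
          linarith
        rw [eq_div_iff hpos.ne', sub_mul, one_mul, div_mul_cancel₀ _ hpos.ne']
        ring
      have hlog := (Real.continuousAt_log one_ne_zero).tendsto.comp hA
      rw [Real.log_one] at hlog
      refine hlog.congr fun n => ?_
      have hn0 : (0:ℝ) ≤ (n:ℝ) := Nat.cast_nonneg n
      rw [Function.comp_apply, Real.log_div (by linarith) (by linarith)]
    have hD := h0.add (tendsto_const_nhds (x := Real.log (s - 1/2)) (f := atTop))
    rwa [zero_add] at hD
  exact le_of_tendsto htend (Eventually.of_forall hbound)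

/-- `g(x,y) = (y / Γ(1+y)^(1/y)) · (Γ(1+xy)^(1/y) / (yˣ · Γ(1+x)))`. -/
noncomputable def g (x y : ℝ) : ℝ :=
  (y / Real.Gamma (1 + y) ^ (1 / y)) *
    (Real.Gamma (1 + x * y) ^ (1 / y) / (y ^ x * Real.Gamma (1 + x)))

/-- For every fixed `y ≥ 2`, `x ↦ g(x,y)` is non-increasing on `[1/2, ∞)`. -/
theorem g_antitone_in_x (x₁ x₂ y : ℝ) (h₁ : 1 / 2 ≤ x₁) (h₁₂ : x₁ ≤ x₂) (hy : 2 ≤ y) :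
    g x₂ y ≤ g x₁ y := by
  have hy0 : (0:ℝ) < y := by linarith
  set F : ℝ → ℝ := fun x =>
    (1/y) * Real.log (Real.Gamma (1 + x*y)) - x * Real.log y - Real.log (Real.Gamma (1 + x))
    with hF
  -- derivative of F
  have hxy_pos : ∀ x : ℝ, 1/2 ≤ x → (0:ℝ) < 1 + x*y := by
    intro x hx
    nlinarith
  have hFd : ∀ x : ℝ, 1/2 ≤ x →
      HasDerivAt F ((1/y) * (psi (1 + x*y) * y) - Real.log y - psi (1 + x) * 1) x := by
    intro x hx
    have c1 : HasDerivAt (fun t : ℝ => 1 + t*y) y x := (hasDerivAt_mul_const y).const_add 1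
    have c2 : HasDerivAt (fun t : ℝ => Real.log (Real.Gamma (1 + t*y))) (psi (1 + x*y) * y) x :=
      by have := (hasDerivAt_logGamma (hxy_pos x hx)).comp x c1; exact this
    have c3 : HasDerivAt (fun t : ℝ => t * Real.log y) (Real.log y) x := hasDerivAt_mul_const _
    have c4 : HasDerivAt (fun t : ℝ => Real.log (Real.Gamma (1 + t))) (psi (1 + x) * 1) x :=
      (hasDerivAt_logGamma (by linarith : (0:ℝ) < 1 + x)).comp x ((hasDerivAt_id x).const_add 1)
    exact ((c2.const_mul (1/y)).sub c3).sub c4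
  have hF'neg : ∀ x : ℝ, 1/2 ≤ x →
      (1/y) * (psi (1 + x*y) * y) - Real.log y - psi (1 + x) * 1 ≤ 0 := by
    intro x hx
    have h1 : psi (1 + x*y) ≤ Real.log (1 + x*y) := psi_le_log (hxy_pos x hx)
    have h2 : Real.log (1 + x - 1/2) ≤ psi (1 + x) := log_half_le_psi (by linarith)
    have h3 : Real.log (1 + x*y) ≤ Real.log y + Real.log (1 + x - 1/2) := by
      rw [← Real.log_mul hy0.ne' (by linarith : (1 + x - 1/2 : ℝ) ≠ 0)]
      apply Real.log_le_log (hxy_pos x hx)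
      nlinarith
    have hsimp : (1/y) * (psi (1 + x*y) * y) = psi (1 + x*y) := by field_simp
    rw [hsimp, mul_one]
    linarith
  have hanti : AntitoneOn F (Ici (1/2 : ℝ)) := by
    apply antitoneOn_of_hasDerivWithinAt_nonpos (convex_Ici _)
      (f' := fun x => (1/y) * (psi (1 + x*y) * y) - Real.log y - psi (1 + x) * 1)
    · exact fun x hx => (hFd x hx).continuousAt.continuousWithinAt
    · intro x hx
      rw [interior_Ici] at hx
      exact (hFd x hx.le).hasDerivWithinAt
    · intro x hx
      rw [interior_Ici] at hx
      exact hF'neg x hx.le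
  have hFle : F x₂ ≤ F x₁ := hanti h₁ (h₁.trans h₁₂) h₁₂
  -- assembly
  have key : ∀ x : ℝ, 1/2 ≤ x →
      Real.Gamma (1 + x * y) ^ (1 / y) / (y ^ x * Real.Gamma (1 + x)) = Real.exp (F x) := by
    intro x hx
    have hG1 : (0:ℝ) < Real.Gamma (1 + x*y) := Real.Gamma_pos_of_pos (hxy_pos x hx)
    have hG2 : (0:ℝ) < Real.Gamma (1 + x) := Real.Gamma_pos_of_pos (by linarith)
    rw [Real.rpow_def_of_pos hG1, Real.rpow_def_of_pos hy0, ← Real.exp_log hG2,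
      ← Real.exp_add, ← Real.exp_sub]
    congr 1
    rw [hF]
    ring
  rw [g, g, key x₁ h₁, key x₂ (h₁.trans h₁₂)]
  apply mul_le_mul_of_nonneg_left (Real.exp_le_exp.2 hFle)
  positivity
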